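/- arXiv:1307.2430 — 2 statements merged into one kernel-verified Lean document; each statement's English description precedes it below -/
import Mathlib

section
/- Let (Ω, μ) be a probability space and let X : Ω → Matrix (Fin n) (Fin n) ℂ be such that X ω is Hermitian positive definite for every ω, each entry ω ↦ X ω i j is integrable, and ω ↦ log(Re(det(X ω))) is integrable. Then the entrywise integral ∫ X dμ is Hermitian positive definite and ∫ log(Re(det(X ω))) dμ(ω) ≤ log(Re(det(∫ X dμ))). (Jensen's inequality for the concave function log det, the step E[log|I + H Hᴴ K|] ≤ log|I + E[H Hᴴ]K| in the proof of the paper's Lemma 4.) -/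
open Matrix MeasureTheory
open scoped ComplexOrder

/-- Congruence by an invertible matrix preserves positive definiteness. -/
lemma posDef_conjTranspose_mul_mul {n : ℕ} {A : Matrix (Fin n) (Fin n) ℂ} (hA : A.PosDef)
    (B : Matrix (Fin n) (Fin n) ℂ) (hB : IsUnit B.det) : (Bᴴ * A * B).PosDef := by
  refine Matrix.PosDef.of_dotProduct_mulVec_pos (Matrix.isHermitian_conjTranspose_mul_mul B hA.1) fun x hx => ?_
  have hBinj : Function.Injective B.mulVec :=
    Matrix.mulVec_injective_iff_isUnit.mpr ((Matrix.isUnit_iff_isUnit_det B).mpr hB)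
  have hBx : B *ᵥ x ≠ 0 := fun h => hx (hBinj (by simpa using h))
  have := hA.dotProduct_mulVec_pos hBx
  simpa only [star_mulVec, dotProduct_mulVec, vecMul_vecMul] using this

/-- For a positive definite matrix, `log det ≤ trace - n`. -/
lemma log_det_le_trace_sub {n : ℕ} {C : Matrix (Fin n) (Fin n) ℂ} (hC : C.PosDef) :
    Real.log C.det.re ≤ C.trace.re - n := by
  have hdet : C.det.re = ∏ i, hC.1.eigenvalues i := by
    rw [hC.1.det_eq_prod_eigenvalues]
    norm_cast
  have htr : C.trace.re = ∑ i, hC.1.eigenvalues i := by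
    have hU : star (hC.1.eigenvectorUnitary : Matrix (Fin n) (Fin n) ℂ) *
        (hC.1.eigenvectorUnitary : Matrix (Fin n) (Fin n) ℂ) = 1 :=
      Unitary.star_mul_self_of_mem hC.1.eigenvectorUnitary.2
    have := hC.1.spectral_theorem
    have h2 : C.trace = ∑ i, (hC.1.eigenvalues i : ℂ) := by
      exact hC.1.trace_eq_sum_eigenvalues
    rw [h2]
    norm_cast
  rw [hdet, htr, Real.log_prod (fun i _ => (hC.eigenvalues_pos i).ne')]
  calc ∑ i, Real.log (hC.1.eigenvalues i)
      ≤ ∑ i, (hC.1.eigenvalues i - 1) :=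
        Finset.sum_le_sum fun i _ => Real.log_le_sub_one_of_pos (hC.eigenvalues_pos i)
    _ = (∑ i, hC.1.eigenvalues i) - n := by
        rw [Finset.sum_sub_distrib, Finset.sum_const, Finset.card_univ, Fintype.card_fin]
        simp

open scoped MatrixOrder in
/-- First-order concavity bound for `log det` at `B`. -/
lemma logDet_le_logDet_add {n : ℕ} {A B : Matrix (Fin n) (Fin n) ℂ}
    (hA : A.PosDef) (hB : B.PosDef) :
    Real.log A.det.re ≤ Real.log B.det.re + ((B⁻¹ * A).trace.re - n) := by
  set S := CFC.sqrt B with hSdef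
  have hS : S.PosSemidef := Matrix.nonneg_iff_posSemidef.mp (CFC.sqrt_nonneg B)
  have hSS : S * S = B := CFC.sqrt_mul_sqrt_self B hB.posSemidef.nonneg
  have hBdet : B.det ≠ 0 := hB.det_pos.ne'
  have hdS : S.det ≠ 0 := fun h => hBdet (by rw [← hSS, Matrix.det_mul, h, mul_zero])
  have hSunit : IsUnit S.det := hdS.isUnit
  have hSi : (S⁻¹).IsHermitian := hS.1.inv
  have hSidet : IsUnit (S⁻¹).det := by
    rw [Matrix.det_nonsing_inv, Ring.inverse_eq_inv']
    exact (inv_ne_zero hdS).isUnit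
  have hC : (S⁻¹ * A * S⁻¹).PosDef := by
    have := posDef_conjTranspose_mul_mul hA S⁻¹ hSidet
    rwa [hSi.eq] at this
  set C := S⁻¹ * A * S⁻¹ with hCdef
  -- determinant relation
  have hdetSi : (S⁻¹).det = S.det⁻¹ := by rw [Matrix.det_nonsing_inv, Ring.inverse_eq_inv']
  have hdetrel : A.det = B.det * C.det := by
    rw [hCdef, Matrix.det_mul, Matrix.det_mul, hdetSi, ← hSS, Matrix.det_mul]
    field_simp
  -- trace relation
  have htrrel : (B⁻¹ * A).trace = C.trace := by
    rw [← hSS, Matrix.mul_inv_rev, hCdef, mul_assoc, Matrix.trace_mul_comm, mul_assoc]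
  -- real parts
  have hBim : B.det.im = 0 := by
    have := hB.det_pos
    rw [Complex.lt_def] at this
    exact this.2.symm
  have hCim : C.det.im = 0 := by
    have := hC.det_pos
    rw [Complex.lt_def] at this
    exact this.2.symm
  have hAre : A.det.re = B.det.re * C.det.re := by
    rw [hdetrel, Complex.mul_re, hBim, hCim]
    ring
  have hBre : 0 < B.det.re := by
    have := hB.det_pos
    rw [Complex.lt_def] at this
    simpa using this.1
  have hCre : 0 < C.det.re := by
    have := hC.det_pos
    rw [Complex.lt_def] at this
    simpa using this.1
  have htrre : (B⁻¹ * A).trace.re = C.trace.re := by rw [htrrel]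
  rw [hAre, Real.log_mul hBre.ne' hCre.ne', htrre]
  have := log_det_le_trace_sub hC
  linarith

/-- Jensen's inequality for the concave function `log det`: if `X` is a
matrix-valued map on a probability space with `X ω` Hermitian positive definite for all
`ω`, integrable entries, and integrable `log (det (X ω))`, then the entrywise integral
of `X` is positive definite and `∫ log (det (X ω)) dμ ≤ log (det (∫ X dμ))`. -/
theorem integral_logDet_le_logDet_integral {n : ℕ} {Ω : Type*} [MeasurableSpace Ω]
    (μ : Measure Ω) [IsProbabilityMeasure μ] (X : Ω → Matrix (Fin n) (Fin n) ℂ)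
    (hPD : ∀ ω, (X ω).PosDef)
    (hEntries : ∀ i j, Integrable (fun ω => X ω i j) μ)
    (hLog : Integrable (fun ω => Real.log ((X ω).det.re)) μ) :
    ∃ _ : (Matrix.of fun i j => ∫ ω, X ω i j ∂μ).PosDef,
      ∫ ω, Real.log ((X ω).det.re) ∂μ ≤
        Real.log ((Matrix.of fun i j => ∫ ω, X ω i j ∂μ).det.re) := by
  set M : Matrix (Fin n) (Fin n) ℂ := Matrix.of fun i j => ∫ ω, X ω i j ∂μ with hMdef
  have hMentry : ∀ i j, M i j = ∫ ω, X ω i j ∂μ := fun i j => rfl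
  -- generic bilinear integral exchange
  have key : ∀ c : Fin n → Fin n → ℂ,
      ∫ ω, (∑ i, ∑ j, c i j * X ω i j) ∂μ = ∑ i, ∑ j, c i j * M i j := by
    intro c
    rw [integral_finset_sum _ fun i _ =>
      integrable_finset_sum _ fun j _ => (hEntries i j).const_mul (c i j)]
    refine Finset.sum_congr rfl fun i _ => ?_
    rw [integral_finset_sum _ fun j _ => (hEntries i j).const_mul (c i j)]
    exact Finset.sum_congr rfl fun j _ => integral_const_mul _ _
  -- M is Hermitian
  have hherm : M.IsHermitian := by
    ext i j
    rw [Matrix.conjTranspose_apply, hMentry, hMentry, RCLike.star_def, ← integral_conj]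
    refine integral_congr_ae (Filter.Eventually.of_forall fun ω => ?_)
    have := (hPD ω).1
    calc (starRingEnd ℂ) (X ω j i) = (X ω)ᴴ i j := rfl
      _ = X ω i j := by rw [this]
  -- M is positive definite
  have hMPD : M.PosDef := by
    refine Matrix.PosDef.of_dotProduct_mulVec_pos hherm fun x hx => ?_
    have hform : ∀ A : Matrix (Fin n) (Fin n) ℂ,
        star x ⬝ᵥ A *ᵥ x = ∑ i, ∑ j, (star (x i) * x j) * A i j := by
      intro A
      simp only [dotProduct, mulVec, Pi.star_apply, Finset.mul_sum]
      exact Finset.sum_congr rfl fun i _ => Finset.sum_congr rfl fun j _ => by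
        simp [dotProduct]; ring
    have hfint : Integrable (fun ω => star x ⬝ᵥ (X ω) *ᵥ x) μ := by
      simp only [hform]
      exact integrable_finset_sum _ fun i _ =>
        integrable_finset_sum _ fun j _ => (hEntries i j).const_mul _
    have hquad : star x ⬝ᵥ M *ᵥ x = ∫ ω, star x ⬝ᵥ (X ω) *ᵥ x ∂μ := by
      simp only [hform]
      exact (key _).symm
    have hpos : ∀ ω, 0 < star x ⬝ᵥ (X ω) *ᵥ x := fun ω => (hPD ω).dotProduct_mulVec_pos hx
    rw [hquad, Complex.lt_def]
    constructor
    · have hre : (∫ ω, star x ⬝ᵥ (X ω) *ᵥ x ∂μ).re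
          = ∫ ω, (star x ⬝ᵥ (X ω) *ᵥ x).re ∂μ := by
        simpa using (integral_re hfint).symm
      rw [hre]
      simp only [Complex.zero_re]
      rw [integral_pos_iff_support_of_nonneg]
      · have : (Function.support fun ω => (star x ⬝ᵥ (X ω) *ᵥ x).re) = Set.univ := by
          ext ω
          simp only [Function.mem_support, Set.mem_univ, iff_true]
          have := hpos ω
          rw [Complex.lt_def] at this
          exact ne_of_gt (by simpa using this.1)
        rw [this]
        simp
      · intro ω
        have := hpos ω
        rw [Complex.lt_def] at this
        exact le_of_lt (by simpa using this.1)
      · exact hfint.re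
    · have him : (∫ ω, star x ⬝ᵥ (X ω) *ᵥ x ∂μ).im
          = ∫ ω, (star x ⬝ᵥ (X ω) *ᵥ x).im ∂μ := by
        simpa using (integral_im hfint).symm
      rw [him]
      simp only [Complex.zero_im]
      rw [← integral_zero Ω ℝ (μ := μ)]
      refine (integral_congr_ae (Filter.Eventually.of_forall fun ω => ?_))
      have := hpos ω
      rw [Complex.lt_def] at this
      simpa using this.2
  refine ⟨hMPD, ?_⟩
  -- integral of the trace term
  have hMunit : IsUnit M.det := hMPD.isUnit.map (MonoidHom.id _) |>.map detMonoidHom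
  have hMinvM : M⁻¹ * M = 1 := Matrix.nonsing_inv_mul M (hMPD.det_pos.ne'.isUnit)
  have htrace_int : ∫ ω, (M⁻¹ * X ω).trace.re ∂μ = (n : ℝ) := by
    have hint : Integrable (fun ω => (M⁻¹ * X ω).trace) μ := by
      have : ∀ ω, (M⁻¹ * X ω).trace = ∑ i, ∑ k, M⁻¹ i k * X ω k i := by
        intro ω
        simp [Matrix.trace, Matrix.diag, Matrix.mul_apply]
      simp only [this]
      exact integrable_finset_sum _ fun i _ =>
        integrable_finset_sum _ fun k _ => (hEntries k i).const_mul _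
    have hcplx : ∫ ω, (M⁻¹ * X ω).trace ∂μ = (n : ℂ) := by
      have h1 : ∀ ω, (M⁻¹ * X ω).trace = ∑ i, ∑ k, (fun a b => M⁻¹ b a) i k * X ω i k := by
        intro ω
        simp only [Matrix.trace, Matrix.diag, Matrix.mul_apply, Finset.sum_apply]
        rw [Finset.sum_comm]
      simp only [h1]
      rw [key]
      have h2 : ∑ i, ∑ k, (fun a b => M⁻¹ b a) i k * M i k = (M⁻¹ * M).trace := by
        simp only [Matrix.trace, Matrix.diag, Matrix.mul_apply]
        rw [Finset.sum_comm]
      rw [h2, hMinvM, Matrix.trace_one]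
      simp
    have : ∫ ω, (M⁻¹ * X ω).trace.re ∂μ = (∫ ω, (M⁻¹ * X ω).trace ∂μ).re := by
      simpa using integral_re hint
    rw [this, hcplx]
    simp
  -- pointwise inequality and integration
  have hptw : ∀ ω, Real.log ((X ω).det.re) ≤
      Real.log (M.det.re) + ((M⁻¹ * X ω).trace.re - n) := fun ω =>
    logDet_le_logDet_add (hPD ω) hMPD
  have hRHSint : Integrable (fun ω => Real.log (M.det.re) + ((M⁻¹ * X ω).trace.re - n)) μ := by
    have hint : Integrable (fun ω => (M⁻¹ * X ω).trace.re) μ := by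
      have h1 : Integrable (fun ω => (M⁻¹ * X ω).trace) μ := by
        have : ∀ ω, (M⁻¹ * X ω).trace = ∑ i, ∑ k, M⁻¹ i k * X ω k i := by
          intro ω
          simp [Matrix.trace, Matrix.diag, Matrix.mul_apply]
        simp only [this]
        exact integrable_finset_sum _ fun i _ =>
          integrable_finset_sum _ fun k _ => (hEntries k i).const_mul _
      exact h1.re
    exact (integrable_const _).add (hint.sub (integrable_const _))
  calc ∫ ω, Real.log ((X ω).det.re) ∂μ
      ≤ ∫ ω, (Real.log (M.det.re) + ((M⁻¹ * X ω).trace.re - n)) ∂μ :=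
        integral_mono hLog hRHSint hptw
    _ = Real.log (M.det.re) := by
        have h1 : Integrable (fun ω => (M⁻¹ * X ω).trace) μ := by
          have h0 : ∀ ω, (M⁻¹ * X ω).trace = ∑ i, ∑ k, M⁻¹ i k * X ω k i := by
            intro ω
            simp [Matrix.trace, Matrix.diag, Matrix.mul_apply]
          simp only [h0]
          exact integrable_finset_sum _ fun i _ =>
            integrable_finset_sum _ fun k _ => (hEntries k i).const_mul _
        have h2 : Integrable (fun ω => (M⁻¹ * X ω).trace.re) μ := by simpa using h1.re
        have hg : Integrable (fun ω => (M⁻¹ * X ω).trace.re - (n : ℝ)) μ :=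
          h2.sub (integrable_const _)
        have hsub : ∫ ω, ((M⁻¹ * X ω).trace.re - (n : ℝ)) ∂μ = 0 := by
          rw [integral_sub h2 (integrable_const _), htrace_int, integral_const]
          simp
        rw [integral_add (integrable_const _) hg, hsub, integral_const]
        simp
end

section
/- Let b : Matrix (Fin N) (Fin n) ℂ, T : Matrix (Fin n) (Fin N) ℂ, let K : Matrix (Fin n) (Fin n) ℂ be positive semidefinite, and let h : Fin n → ℂ. Then the (N+1)×(N+1) block matrix M = [[I_N + b*K*bᴴ, (Tᴴ + b*K) *ᵥ h], [(star h) ᵥ* (T + K*bᴴ), 1 + (star h) ⬝ᵥ ((T*Tᴴ + K) *ᵥ h)]] (built with Matrix.fromBlocks, with top-right the column (Tᴴ + bK)h, bottom-left the row hᴴ(T + K bᴴ), and bottom-right the 1×1 scalar 1 + hᴴ(T Tᴴ + K)h) is Hermitian positive definite. (This guarantees that the term log|M| in the secrecy rate bound Δ of the paper's Lemma 3, equations (13)–(14), is well defined.) -/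
open Matrix
open scoped ComplexOrder

lemma aux_posDef_conjTranspose_mul_self {m : Type*} [Fintype m] [DecidableEq m]
    (A : Matrix m m ℂ) (hA : IsUnit A) : (Aᴴ * A).PosDef := by
  refine posDef_iff_dotProduct_mulVec.mpr ⟨Matrix.isHermitian_conjTranspose_mul_self A, fun x hx => ?_⟩
  have hAx : A *ᵥ x ≠ 0 := by
    intro hc
    exact hx (Matrix.mulVec_injective_iff_isUnit.mpr hA
      (show A *ᵥ x = A *ᵥ 0 by simpa using hc))
  have hq : star x ⬝ᵥ ((Aᴴ * A) *ᵥ x) = star (A *ᵥ x) ⬝ᵥ (A *ᵥ x) := by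
    rw [← Matrix.mulVec_mulVec, Matrix.dotProduct_mulVec, ← Matrix.star_mulVec]
  rw [hq]
  exact Matrix.dotProduct_star_self_pos_iff.mpr hAx

/-- The block matrix `M` appearing in the secrecy rate bound `Δ` of
Lemma 3 is Hermitian positive definite: for `b : N × n`, `T : n × N`, `K : n × n`
positive semidefinite, and `h ∈ ℂⁿ`, the matrix
`[[I + b K bᴴ, (Tᴴ + b K) h], [hᴴ (T + K bᴴ), 1 + hᴴ (T Tᴴ + K) h]]`
is positive definite. -/
theorem posDef_rate_block_matrix {n N : ℕ}
    (b : Matrix (Fin N) (Fin n) ℂ) (T : Matrix (Fin n) (Fin N) ℂ)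
    (K : Matrix (Fin n) (Fin n) ℂ) (hK : K.PosSemidef) (h : Fin n → ℂ) :
    (Matrix.fromBlocks
        ((1 : Matrix (Fin N) (Fin N) ℂ) + b * K * bᴴ)
        (Matrix.of fun i (_ : Fin 1) => ((Tᴴ + b * K) *ᵥ h) i)
        (Matrix.of fun (_ : Fin 1) j => ((star h) ᵥ* (T + K * bᴴ)) j)
        (Matrix.of fun (_ : Fin 1) (_ : Fin 1) =>
          1 + (star h) ⬝ᵥ ((T * Tᴴ + K) *ᵥ h))).PosDef := by
  classical
  obtain ⟨L, hLH, hLL⟩ : ∃ L : Matrix (Fin n) (Fin n) ℂ, Lᴴ = L ∧ L * L = K :=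
    by
      open scoped MatrixOrder in
      exact ⟨CFC.sqrt K, (Matrix.nonneg_iff_posSemidef.mp (CFC.sqrt_nonneg K)).1,
        CFC.sqrt_mul_sqrt_self K (Matrix.nonneg_iff_posSemidef.mpr hK)⟩
  set C₁ : Matrix (Fin N ⊕ Fin 1) (Fin N ⊕ Fin 1) ℂ :=
    fromBlocks 1 (replicateCol (Fin 1) (Tᴴ *ᵥ h)) 0 1 with hC₁
  set C₂ : Matrix (Fin n) (Fin N ⊕ Fin 1) ℂ :=
    fromCols (L * bᴴ) (replicateCol (Fin 1) (L *ᵥ h)) with hC₂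
  have key : (Matrix.fromBlocks
        ((1 : Matrix (Fin N) (Fin N) ℂ) + b * K * bᴴ)
        (Matrix.of fun i (_ : Fin 1) => ((Tᴴ + b * K) *ᵥ h) i)
        (Matrix.of fun (_ : Fin 1) j => ((star h) ᵥ* (T + K * bᴴ)) j)
        (Matrix.of fun (_ : Fin 1) (_ : Fin 1) =>
          1 + (star h) ⬝ᵥ ((T * Tᴴ + K) *ᵥ h))) = C₂ᴴ * C₂ + C₁ᴴ * C₁ := by
    rw [hC₂, hC₁, conjTranspose_fromCols_eq_fromRows_conjTranspose,
      fromRows_mul_fromCols, fromBlocks_conjTranspose, fromBlocks_multiply,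
      fromBlocks_add]
    refine fromBlocks_inj.mpr ⟨?_, ?_, ?_, ?_⟩ <;>
      simp only [conjTranspose_mul, conjTranspose_conjTranspose, conjTranspose_one,
        conjTranspose_zero, conjTranspose_replicateCol, hLH, Matrix.zero_mul, Matrix.mul_zero,
        Matrix.one_mul, Matrix.mul_one, add_zero, zero_add, star_mulVec]
    · -- (1,1) block
      rw [show b * K * bᴴ = b * L * (L * bᴴ) by rw [← hLL]; simp only [Matrix.mul_assoc], add_comm]
    · -- (1,2) block
      show replicateCol (Fin 1) ((Tᴴ + b * K) *ᵥ h) =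
        b * L * replicateCol (Fin 1) (L *ᵥ h) + replicateCol (Fin 1) (Tᴴ *ᵥ h)
      rw [← replicateCol_mulVec, mulVec_mulVec, add_mulVec, replicateCol_add,
        show b * L * L = b * K by rw [Matrix.mul_assoc, hLL], add_comm]
    · -- (2,1) block
      show replicateRow (Fin 1) ((star h) ᵥ* (T + K * bᴴ)) =
        replicateRow (Fin 1) (star h ᵥ* L) * (L * bᴴ) + replicateRow (Fin 1) (star h ᵥ* T)
      rw [← replicateRow_vecMul, vecMul_vecMul, ← replicateRow_add, ← vecMul_add,
        show L * (L * bᴴ) = K * bᴴ by rw [← Matrix.mul_assoc, hLL], add_comm T]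
    · -- (2,2) block
      show (Matrix.of fun (_ : Fin 1) (_ : Fin 1) =>
          1 + (star h) ⬝ᵥ ((T * Tᴴ + K) *ᵥ h)) =
        replicateRow (Fin 1) (star h ᵥ* L) * replicateCol (Fin 1) (L *ᵥ h) +
          (replicateRow (Fin 1) (star h ᵥ* T) * replicateCol (Fin 1) (Tᴴ *ᵥ h) + 1)
      rw [replicateRow_mul_replicateCol, replicateRow_mul_replicateCol]
      ext i j
      have hij : i = j := Subsingleton.elim i j
      subst hij
      simp only [Matrix.of_apply, Matrix.add_apply, Matrix.one_apply_eq]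
      rw [← dotProduct_mulVec, ← dotProduct_mulVec, mulVec_mulVec, mulVec_mulVec,
        hLL, add_mulVec, dotProduct_add]
      ring

  rw [key]
  refine Matrix.PosDef.posSemidef_add (Matrix.posSemidef_conjTranspose_mul_self C₂)
    (aux_posDef_conjTranspose_mul_self C₁ ?_)
  rw [hC₁]
  refine (Matrix.isUnit_iff_isUnit_det _).mpr ?_
  simp [Matrix.det_fromBlocks_zero₂₁]
end
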